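/- Let G = PSL_2(27) and let Q be a Sylow 2-subgroup of G (of order 4). Then there exists g ∈ G such that every element of the coset gQ has even order. -/

import Mathlib

open Matrix Pointwise
open scoped MatrixGroups

namespace ThompsonPSL227

open Polynomial

/-! ### Generic `2 × 2` matrix lemmas -/

section CommRingLemmas

variable {R : Type*} [CommRing R]

lemma sl2_mul_self (A : Matrix (Fin 2) (Fin 2) R) :
    A * A = A.trace • A - A.det • (1 : Matrix (Fin 2) (Fin 2) R) := by
  ext i j
  fin_cases i <;> fin_cases j <;>
    simp [Matrix.mul_apply, Fin.sum_univ_two, Matrix.trace_fin_two, Matrix.det_fin_two,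
      Matrix.one_apply] <;> ring

lemma mul_self_of_trace_zero {A : Matrix (Fin 2) (Fin 2) R} (ht : A.trace = 0)
    (hd : A.det = 1) : A * A = -1 := by
  rw [sl2_mul_self, ht, hd]; simp

lemma trace_pow_seven (A : Matrix (Fin 2) (Fin 2) R) (hd : A.det = 1) :
    (A ^ 7).trace =
      A.trace ^ 7 - 7 * A.trace ^ 5 + 14 * A.trace ^ 3 - 7 * A.trace := by
  set t := A.trace with ht
  have h2 : A * A = t • A - 1 := by rw [sl2_mul_self, hd, ← ht]; simp
  have e2 : A ^ 2 = t • A - 1 := by rw [pow_two, h2]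
  have e3 : A ^ 3 = (t ^ 2 - 1) • A - t • (1 : Matrix (Fin 2) (Fin 2) R) := by
    rw [pow_succ, e2, sub_mul, smul_mul_assoc, one_mul, h2]; module
  have e4 : A ^ 4 = (t ^ 3 - 2 * t) • A - (t ^ 2 - 1) • (1 : Matrix (Fin 2) (Fin 2) R) := by
    rw [pow_succ, e3, sub_mul, smul_mul_assoc, smul_mul_assoc, one_mul, h2]; module
  have e5 : A ^ 5 = (t ^ 4 - 3 * t ^ 2 + 1) • A
      - (t ^ 3 - 2 * t) • (1 : Matrix (Fin 2) (Fin 2) R) := by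
    rw [pow_succ, e4, sub_mul, smul_mul_assoc, smul_mul_assoc, one_mul, h2]; module
  have e6 : A ^ 6 = (t ^ 5 - 4 * t ^ 3 + 3 * t) • A
      - (t ^ 4 - 3 * t ^ 2 + 1) • (1 : Matrix (Fin 2) (Fin 2) R) := by
    rw [pow_succ, e5, sub_mul, smul_mul_assoc, smul_mul_assoc, one_mul, h2]; module
  have e7 : A ^ 7 = (t ^ 6 - 5 * t ^ 4 + 6 * t ^ 2 - 1) • A
      - (t ^ 5 - 4 * t ^ 3 + 3 * t) • (1 : Matrix (Fin 2) (Fin 2) R) := by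
    rw [pow_succ, e6, sub_mul, smul_mul_assoc, smul_mul_assoc, one_mul, h2]; module
  rw [e7, Matrix.trace_sub, Matrix.trace_smul, Matrix.trace_smul, Matrix.trace_one]
  simp only [smul_eq_mul, Fintype.card_fin, ← ht]
  push_cast
  ring

end CommRingLemmas

/-! ### The parity criterion in `PSL₂` over a field in which `2 ≠ 0` -/

section Criterion

variable {K : Type*} [Field K]

instance : Fact (Even (Fintype.card (Fin 2))) := ⟨by simp⟩

lemma coe_pow_sl (S : Matrix.SpecialLinearGroup (Fin 2) K) (n : ℕ) :
    ((S ^ n : Matrix.SpecialLinearGroup (Fin 2) K) : Matrix (Fin 2) (Fin 2) K)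
      = (S : Matrix (Fin 2) (Fin 2) K) ^ n := by
  induction n with
  | zero => simp
  | succ n ih => rw [pow_succ, pow_succ, Matrix.SpecialLinearGroup.coe_mul, ih]

lemma neg_one_mem_center :
    (-1 : Matrix.SpecialLinearGroup (Fin 2) K) ∈
      Subgroup.center (Matrix.SpecialLinearGroup (Fin 2) K) := by
  refine Subgroup.mem_center_iff.mpr fun g => ?_
  apply Subtype.ext
  simp

lemma mk_neg (g : Matrix.SpecialLinearGroup (Fin 2) K) :
    (QuotientGroup.mk (-g) : Matrix.ProjectiveSpecialLinearGroup (Fin 2) K)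
      = QuotientGroup.mk g := by
  have h1 : (QuotientGroup.mk (-1 : Matrix.SpecialLinearGroup (Fin 2) K) :
      Matrix.ProjectiveSpecialLinearGroup (Fin 2) K) = 1 :=
    (QuotientGroup.eq_one_iff _).mpr neg_one_mem_center
  calc (QuotientGroup.mk (-g) : Matrix.ProjectiveSpecialLinearGroup (Fin 2) K)
      = QuotientGroup.mk ((-1) * g) := by rw [neg_one_mul]
    _ = QuotientGroup.mk (-1 : Matrix.SpecialLinearGroup (Fin 2) K) * QuotientGroup.mk g := rfl
    _ = QuotientGroup.mk g := by rw [h1, one_mul]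

/-- The key criterion: if `tr((S)^7) = 0` then the image of `S` in `PSL₂(K)` has even order. -/
lemma two_dvd_orderOf_mk (h2 : (2 : K) ≠ 0) (S : Matrix.SpecialLinearGroup (Fin 2) K)
    (htr : ((S : Matrix (Fin 2) (Fin 2) K) ^ 7).trace = 0) :
    2 ∣ orderOf (QuotientGroup.mk S : Matrix.ProjectiveSpecialLinearGroup (Fin 2) K) := by
  set q : Matrix.ProjectiveSpecialLinearGroup (Fin 2) K := QuotientGroup.mk S with hq
  have hdet7 : ((S : Matrix (Fin 2) (Fin 2) K) ^ 7).det = 1 := by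
    rw [Matrix.det_pow, S.prop, one_pow]
  have hsq : ((S : Matrix (Fin 2) (Fin 2) K) ^ 7) * ((S : Matrix (Fin 2) (Fin 2) K) ^ 7)
      = -1 := mul_self_of_trace_zero htr hdet7
  have hS14 : S ^ 14 = (-1 : Matrix.SpecialLinearGroup (Fin 2) K) := by
    apply Subtype.ext
    rw [coe_pow_sl, Matrix.SpecialLinearGroup.coe_neg, Matrix.SpecialLinearGroup.coe_one]
    calc (S : Matrix (Fin 2) (Fin 2) K) ^ 14
        = (S : Matrix (Fin 2) (Fin 2) K) ^ 7 * (S : Matrix (Fin 2) (Fin 2) K) ^ 7 := by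
          rw [← pow_add]
      _ = -1 := hsq
  have h14 : q ^ 14 = 1 := by
    have : q ^ 14 = QuotientGroup.mk (S ^ 14) := rfl
    rw [this, hS14, mk_neg]
    exact (QuotientGroup.eq_one_iff _).mpr (Subgroup.one_mem _)
  have h7 : q ^ 7 ≠ 1 := by
    intro h
    have hmem : S ^ 7 ∈ Subgroup.center (Matrix.SpecialLinearGroup (Fin 2) K) :=
      (QuotientGroup.eq_one_iff _).mp h
    obtain ⟨r, hr, hscal⟩ := Matrix.SpecialLinearGroup.mem_center_iff.mp hmem
    have htr' : (Matrix.scalar (Fin 2) r).trace = 0 := by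
      rw [hscal, coe_pow_sl]; exact htr
    have h2r : r + r = 0 := by
      rcases (by simpa [Matrix.trace_fin_two, Matrix.scalar_apply] using htr' : (2:K) = 0 ∨ r = 0) with h | h
      · exact absurd h h2
      · rw [h, add_zero]
    have hr0 : r = 0 := by
      have : (2 : K) * r = 0 := by rw [two_mul]; exact h2r
      rcases mul_eq_zero.mp this with h | h
      · exact absurd h h2
      · exact h
    rw [hr0, Fintype.card_fin] at hr
    simp at hr
  have hdvd : orderOf q ∣ 14 := orderOf_dvd_of_pow_eq_one h14
  have hndvd : ¬ orderOf q ∣ 7 := fun hh => h7 (orderOf_dvd_iff_pow_eq_one.mp hh)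
  by_contra hodd
  apply hndvd
  have hcop : Nat.Coprime (orderOf q) 2 :=
    Nat.Coprime.symm ((Nat.Prime.coprime_iff_not_dvd Nat.prime_two).mpr hodd)
  exact Nat.Coprime.dvd_of_dvd_mul_right hcop (by rwa [show 7 * 2 = 14 from rfl])

end Criterion

/-! ### The field `F₂₇ = GaloisField 3 3` -/

noncomputable section F27

abbrev F₂₇ : Type := GaloisField 3 3

abbrev SL27 : Type := Matrix.SpecialLinearGroup (Fin 2) F₂₇

abbrev PSL27 : Type := Matrix.ProjectiveSpecialLinearGroup (Fin 2) F₂₇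

lemma h3 : (3 : F₂₇) = 0 := by
  have := CharP.cast_eq_zero F₂₇ 3
  exact_mod_cast this

lemma h2ne : (2 : F₂₇) ≠ 0 := by
  intro h
  apply one_ne_zero (α := F₂₇)
  linear_combination h3 - h

lemma card_F27 : Nat.card F₂₇ = 27 := by
  have := GaloisField.card 3 3 (by norm_num)
  simpa using this

set_option synthInstance.maxHeartbeats 1000000 in
/-- There is an element `α ∈ F₂₇` with `α ^ 3 = α + 1`. -/
lemma exists_alpha : ∃ a : F₂₇, a ^ 3 = a + 1 := by
  classical
  set f : Polynomial (ZMod 3) := X ^ 3 - X - 1 with hf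
  have hf1 : f = X ^ 3 - (X + 1) := by ring
  have hmonic : f.Monic := by
    rw [hf1]
    apply Polynomial.monic_X_pow_sub
    have h1 : (X + 1 : Polynomial (ZMod 3)).degree ≤ 1 := by
      compute_degree!
    exact lt_of_le_of_lt h1 (by decide)
  have hf0 : f ≠ 0 := hmonic.ne_zero
  have hdeg : f.natDegree = 3 := by
    rw [hf]
    compute_degree!
  have hroots : f.roots = 0 := by
    apply Multiset.eq_zero_of_forall_notMem
    intro x hx
    have hx' : f.IsRoot x := (Polynomial.mem_roots hf0).mp hx
    rw [hf] at hx'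
    have hx2 : x ^ 3 - x - 1 = 0 := by simpa using hx'
    clear hx hx'
    revert x
    decide
  have hirr : Irreducible f :=
    (hmonic.irreducible_iff_roots_eq_zero_of_degree_le_three (by omega) (by omega)).mpr hroots
  haveI : Fact (Irreducible f) := ⟨hirr⟩
  let Kr := AdjoinRoot f
  let pb : PowerBasis (ZMod 3) Kr := AdjoinRoot.powerBasis hf0
  haveI : Module.Finite (ZMod 3) Kr := Module.Finite.of_basis pb.basis
  haveI : Finite Kr := Module.finite_of_finite (ZMod 3)
  haveI : Fintype Kr := Fintype.ofFinite Kr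
  haveI : Fintype F₂₇ := Fintype.ofFinite F₂₇
  have hcardKr : Fintype.card Kr = 27 := by
    rw [Module.card_fintype pb.basis]
    simp only [ZMod.card, Fintype.card_fin]
    rw [AdjoinRoot.powerBasis_dim, hdeg]
    norm_num
  have hcardF : Fintype.card F₂₇ = 27 := by
    rw [← Nat.card_eq_fintype_card]; exact card_F27
  let e : Kr ≃ₐ[ZMod 3] F₂₇ := FiniteField.algEquivOfCardEq 3 (hcardKr.trans hcardF.symm)
  let φ : Kr →+* F₂₇ := e.toAlgHom.toRingHom
  refine ⟨φ (AdjoinRoot.root f), ?_⟩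
  have hroot : (AdjoinRoot.root f) ^ 3 = AdjoinRoot.root f + 1 := by
    have h0 := AdjoinRoot.eval₂_root f
    rw [hf] at h0
    simp only [Polynomial.eval₂_sub, Polynomial.eval₂_pow, Polynomial.eval₂_X,
      Polynomial.eval₂_one] at h0
    linear_combination h0
  rw [← map_pow φ, hroot, map_add φ, map_one φ]

end F27

/-! ### The explicit Klein four subgroup of `PSL₂(27)` -/

noncomputable section KleinFour

open Matrix.SpecialLinearGroup

def w1 : SL27 := ⟨!![0, 1; -1, 0], by norm_num [Matrix.det_fin_two_of]⟩

def w2 : SL27 := ⟨!![1, 1; 1, -1], by rw [Matrix.det_fin_two_of]; linear_combination -h3⟩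

def w3 : SL27 := w1 * w2

lemma w1_coe : (w1 : Matrix (Fin 2) (Fin 2) F₂₇) = !![0, 1; -1, 0] := rfl
lemma w2_coe : (w2 : Matrix (Fin 2) (Fin 2) F₂₇) = !![1, 1; 1, -1] := rfl

lemma w3_coe : (w3 : Matrix (Fin 2) (Fin 2) F₂₇) = !![1, -1; -1, -1] := by
  show ((w1 * w2 : SL27) : Matrix (Fin 2) (Fin 2) F₂₇) = _
  rw [Matrix.SpecialLinearGroup.coe_mul, w1_coe, w2_coe]
  ext i j
  fin_cases i <;> fin_cases j <;>
    simp [Matrix.mul_apply, Fin.sum_univ_two] <;>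
    first | ring1 | linear_combination h3 | linear_combination -h3

lemma products :
    (w1 * w1 = -1) ∧ (w2 * w2 = -1) ∧ (w3 * w3 = -1) ∧ (w2 * w1 = -w3) ∧ (w1 * w3 = -w2)
      ∧ (w3 * w1 = w2) ∧ (w2 * w3 = w1) ∧ (w3 * w2 = -w1) := by
  refine ⟨?_, ?_, ?_, ?_, ?_, ?_, ?_, ?_⟩
  all_goals
    apply Subtype.ext
    simp only [Matrix.SpecialLinearGroup.coe_mul, Matrix.SpecialLinearGroup.coe_neg,
      Matrix.SpecialLinearGroup.coe_one, w1_coe, w2_coe, w3_coe]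
    ext i j
    fin_cases i <;> fin_cases j <;>
      simp [Matrix.mul_apply, Fin.sum_univ_two, Matrix.one_apply] <;>
      first
      | ring1
      | linear_combination h3
      | linear_combination -h3
      | linear_combination (2 : F₂₇) * h3
      | linear_combination (-2 : F₂₇) * h3

lemma hw11 : w1 * w1 = -1 := products.1
lemma hw22 : w2 * w2 = -1 := products.2.1
lemma hw33 : w3 * w3 = -1 := products.2.2.1
lemma hw21 : w2 * w1 = -w3 := products.2.2.2.1
lemma hw13 : w1 * w3 = -w2 := products.2.2.2.2.1
lemma hw31 : w3 * w1 = w2 := products.2.2.2.2.2.1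
lemma hw23 : w2 * w3 = w1 := products.2.2.2.2.2.2.1
lemma hw32 : w3 * w2 = -w1 := products.2.2.2.2.2.2.2

def aP : PSL27 := QuotientGroup.mk w1
def bP : PSL27 := QuotientGroup.mk w2
def cP : PSL27 := QuotientGroup.mk w3

lemma mk_mul (x y : SL27) :
    (QuotientGroup.mk (x * y) : PSL27) = QuotientGroup.mk x * QuotientGroup.mk y := rfl

lemma haa : aP * aP = 1 := by
  rw [aP, ← mk_mul, hw11]
  exact (QuotientGroup.eq_one_iff _).mpr neg_one_mem_center
lemma hbb : bP * bP = 1 := by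
  rw [bP, ← mk_mul, hw22]
  exact (QuotientGroup.eq_one_iff _).mpr neg_one_mem_center
lemma hcc : cP * cP = 1 := by
  rw [cP, ← mk_mul, hw33]
  exact (QuotientGroup.eq_one_iff _).mpr neg_one_mem_center
lemma hab : aP * bP = cP := by rw [aP, bP, ← mk_mul]; rfl
lemma hba : bP * aP = cP := by rw [aP, bP, ← mk_mul, hw21, mk_neg]; rfl
lemma hac : aP * cP = bP := by rw [aP, cP, ← mk_mul, hw13, mk_neg]; rfl
lemma hca : cP * aP = bP := by rw [aP, cP, ← mk_mul, hw31]; rfl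
lemma hbc : bP * cP = aP := by rw [bP, cP, ← mk_mul, hw23]; rfl
lemma hcb : cP * bP = aP := by rw [bP, cP, ← mk_mul, hw32, mk_neg]; rfl

lemma not_central (g : SL27) (i j : Fin 2) (hij : i ≠ j)
    (hne : (g : Matrix (Fin 2) (Fin 2) F₂₇) i j ≠ 0) :
    (QuotientGroup.mk g : PSL27) ≠ 1 := by
  intro h
  have hmem : g ∈ Subgroup.center SL27 := (QuotientGroup.eq_one_iff _).mp h
  obtain ⟨r, _, hscal⟩ := Matrix.SpecialLinearGroup.mem_center_iff.mp hmem
  apply hne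
  rw [← hscal]
  simp [Matrix.scalar_apply, Matrix.diagonal_apply_ne _ hij]

lemma ha1 : aP ≠ 1 := by
  apply not_central w1 0 1 (by decide)
  rw [w1_coe]; norm_num

lemma hb1 : bP ≠ 1 := by
  apply not_central w2 0 1 (by decide)
  rw [w2_coe]; norm_num

lemma hc1 : cP ≠ 1 := by
  apply not_central w3 0 1 (by decide)
  rw [w3_coe]
  simp

lemma hab_ne : aP ≠ bP := by
  intro h
  apply hc1
  rw [← hab, h, hbb]

lemma hac_ne : aP ≠ cP := by
  intro h
  apply hb1
  rw [← hac, h, hcc]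

lemma hbc_ne : bP ≠ cP := by
  intro h
  apply ha1
  rw [← hbc, h, hcc]

/-- The explicit Klein four subgroup of `PSL₂(27)`. -/
def P : Subgroup PSL27 where
  carrier := {1, aP, bP, cP}
  one_mem' := by left; rfl
  mul_mem' := by
    intro x y hx hy
    simp only [Set.mem_insert_iff, Set.mem_singleton_iff] at hx hy ⊢
    rcases hx with rfl | rfl | rfl | rfl <;> rcases hy with rfl | rfl | rfl | rfl <;>
      simp [haa, hbb, hcc, hab, hba, hac, hca, hbc, hcb]
  inv_mem' := by
    intro x hx
    simp only [Set.mem_insert_iff, Set.mem_singleton_iff] at hx ⊢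
    rcases hx with rfl | rfl | rfl | rfl
    · simp
    · rw [inv_eq_of_mul_eq_one_right haa]; simp
    · rw [inv_eq_of_mul_eq_one_right hbb]; simp
    · rw [inv_eq_of_mul_eq_one_right hcc]; simp

lemma P_coe : (P : Set PSL27) = {1, aP, bP, cP} := rfl

lemma card_P : Nat.card P = 4 := by
  have h1 : Nat.card P = ({1, aP, bP, cP} : Set PSL27).ncard := by
    rw [← Nat.card_coe_set_eq, ← P_coe]; rfl
  rw [h1]
  rw [Set.ncard_insert_of_notMem (by simp [ha1.symm, hb1.symm, hc1.symm]) (Set.toFinite _),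
    Set.ncard_insert_of_notMem (by simp [hab_ne, hac_ne]) (Set.toFinite _),
    Set.ncard_pair hbc_ne]

end KleinFour

/-! ### Cardinality computations -/

noncomputable section Cards

lemma det_surj :
    Function.Surjective (Matrix.GeneralLinearGroup.det : GL (Fin 2) F₂₇ →* F₂₇ˣ) := by
  intro u
  refine ⟨⟨Matrix.diagonal ![(u : F₂₇), 1], Matrix.diagonal ![((u⁻¹ : F₂₇ˣ) : F₂₇), 1],
    ?_, ?_⟩, ?_⟩
  · ext i j
    fin_cases i <;> fin_cases j <;>
      simp [Matrix.mul_apply, Fin.sum_univ_two, Matrix.diagonal_apply, Matrix.one_apply]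
  · ext i j
    fin_cases i <;> fin_cases j <;>
      simp [Matrix.mul_apply, Fin.sum_univ_two, Matrix.diagonal_apply, Matrix.one_apply]
  · apply Units.ext
    rw [Matrix.GeneralLinearGroup.val_det_apply]
    simp [Matrix.det_diagonal, Fin.prod_univ_two]

def slEquivKer : SL27 ≃
    (Matrix.GeneralLinearGroup.det : GL (Fin 2) F₂₇ →* F₂₇ˣ).ker where
  toFun S := ⟨Matrix.SpecialLinearGroup.toGL S, by
    rw [MonoidHom.mem_ker]
    apply Units.ext
    rw [Matrix.GeneralLinearGroup.val_det_apply]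
    exact S.prop⟩
  invFun g := ⟨((g : GL (Fin 2) F₂₇) : Matrix (Fin 2) (Fin 2) F₂₇), by
    have := g.prop
    rw [MonoidHom.mem_ker] at this
    have h := congrArg Units.val this
    rwa [Matrix.GeneralLinearGroup.val_det_apply] at h⟩
  left_inv S := Subtype.ext rfl
  right_inv g := Subtype.ext (Units.ext rfl)

lemma card_GL27 : Nat.card (GL (Fin 2) F₂₇) = 511056 := by
  haveI : Fintype F₂₇ := Fintype.ofFinite F₂₇
  have hq : Fintype.card F₂₇ = 27 := by rw [← Nat.card_eq_fintype_card]; exact card_F27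
  rw [Matrix.card_GL_field, Fin.prod_univ_two, hq]
  norm_num

lemma card_units27 : Nat.card F₂₇ˣ = 26 := by
  rw [Nat.card_units, card_F27]

lemma card_SL27 : Nat.card SL27 = 19656 := by
  have e1 := Subgroup.card_eq_card_quotient_mul_card_subgroup
    (Matrix.GeneralLinearGroup.det : GL (Fin 2) F₂₇ →* F₂₇ˣ).ker
  have e2 : Nat.card (GL (Fin 2) F₂₇ ⧸
      (Matrix.GeneralLinearGroup.det : GL (Fin 2) F₂₇ →* F₂₇ˣ).ker) = Nat.card F₂₇ˣ :=
    Nat.card_congr (QuotientGroup.quotientKerEquivOfSurjective _ det_surj).toEquiv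
  have e4 : Nat.card SL27 = Nat.card
      (Matrix.GeneralLinearGroup.det : GL (Fin 2) F₂₇ →* F₂₇ˣ).ker :=
    Nat.card_congr slEquivKer
  rw [card_GL27, e2, card_units27] at e1
  omega

lemma center_coe :
    (Subgroup.center SL27 : Set SL27) = {1, -1} := by
  ext A
  simp only [SetLike.mem_coe, Set.mem_insert_iff, Set.mem_singleton_iff]
  constructor
  · intro h
    obtain ⟨r, hr, hscal⟩ := Matrix.SpecialLinearGroup.mem_center_iff.mp h
    rw [Fintype.card_fin] at hr
    have : (r - 1) * (r + 1) = 0 := by linear_combination hr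
    rcases mul_eq_zero.mp this with h' | h'
    · left
      apply Subtype.ext
      have hr1 : r = 1 := by linear_combination h'
      rw [← hscal, hr1]
      ext i j
      fin_cases i <;> fin_cases j <;>
        simp [Matrix.scalar_apply, Matrix.diagonal_apply, Matrix.one_apply]
    · right
      apply Subtype.ext
      have hr1 : r = -1 := by linear_combination h'
      rw [← hscal, hr1, Matrix.SpecialLinearGroup.coe_neg,
        Matrix.SpecialLinearGroup.coe_one]
      ext i j
      fin_cases i <;> fin_cases j <;>
        simp [Matrix.scalar_apply, Matrix.diagonal_apply, Matrix.one_apply,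
          Matrix.neg_apply]
  · rintro (rfl | rfl)
    · exact Subgroup.one_mem _
    · exact neg_one_mem_center

lemma one_ne_neg_one : (1 : SL27) ≠ -1 := by
  intro h
  have h' := congrArg (fun S : SL27 => (S : Matrix (Fin 2) (Fin 2) F₂₇) 0 0) h
  simp only [Matrix.SpecialLinearGroup.coe_neg, Matrix.SpecialLinearGroup.coe_one,
    Matrix.neg_apply, Matrix.one_apply_eq] at h'
  apply h2ne
  linear_combination h'

lemma card_center : Nat.card (Subgroup.center SL27) = 2 := by
  have h1 : Nat.card (Subgroup.center SL27) = ({1, -1} : Set SL27).ncard := by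
    rw [← Nat.card_coe_set_eq, ← center_coe]; rfl
  rw [h1, Set.ncard_pair one_ne_neg_one]

lemma card_PSL27 : Nat.card PSL27 = 9828 := by
  have e1 := Subgroup.card_eq_card_quotient_mul_card_subgroup (Subgroup.center SL27)
  rw [card_SL27, card_center] at e1
  have : Nat.card PSL27 = Nat.card (SL27 ⧸ Subgroup.center SL27) := rfl
  omega

end Cards

/-! ### The Sylow subgroup -/

noncomputable section SylowPart

lemma factorization_9828 : (9828 : ℕ).factorization 2 = 2 := by
  have h : (9828 : ℕ) = 2 ^ 2 * 2457 := by norm_num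
  rw [h, Nat.factorization_mul (by norm_num) (by norm_num)]
  rw [Nat.Prime.factorization_pow Nat.prime_two]
  simp [Nat.factorization_eq_zero_of_not_dvd (by norm_num : ¬ (2 : ℕ) ∣ 2457)]

def PSyl : Sylow 2 PSL27 :=
  Sylow.ofCard P (by rw [card_P, card_PSL27, factorization_9828]; norm_num)

lemma PSyl_coe : (PSyl : Subgroup PSL27) = P := rfl

end SylowPart

end ThompsonPSL227

open ThompsonPSL227

/-- The analogue of Thompson's theorem for `G = PSL₂(27)` (where `F₂₇ = GaloisField 3 3`):
there is a coset `gQ` of a Sylow `2`-subgroup `Q` (of order `4`) all of whose elements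
have even order. -/
theorem thompson_PSL2_27
    (Q : Sylow 2 (Matrix.ProjectiveSpecialLinearGroup (Fin 2) (GaloisField 3 3))) :
    ∃ g : Matrix.ProjectiveSpecialLinearGroup (Fin 2) (GaloisField 3 3),
      ∀ h ∈ g • ((Q : Subgroup (Matrix.ProjectiveSpecialLinearGroup (Fin 2) (GaloisField 3 3))) :
          Set (Matrix.ProjectiveSpecialLinearGroup (Fin 2) (GaloisField 3 3))),
        2 ∣ orderOf h := by
  classical
  obtain ⟨α, hα⟩ := exists_alpha
  set m : SL27 := ⟨!![1, α; α, 1 + α ^ 2], by rw [Matrix.det_fin_two_of]; ring⟩ with hm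
  have hm_coe : (m : Matrix (Fin 2) (Fin 2) F₂₇) = !![1, α; α, 1 + α ^ 2] := rfl
  -- trace conditions for the four coset representatives
  have htm : (((m : Matrix (Fin 2) (Fin 2) F₂₇)) ^ 7).trace = 0 := by
    rw [trace_pow_seven _ m.prop, hm_coe, Matrix.trace_fin_two_of]
    linear_combination
      ((1024:F₂₇) + (917)*α + (411)*α^2 + (613)*α^3 + (108)*α^4 + (303)*α^5 + (16)*α^6
        + (92)*α^7 + (1)*α^8 + (15)*α^9 + (1)*α^11) * hα
      + ((342:F₂₇) + (647)*α + (459)*α^2) * h3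
  have det_mw : ∀ w : SL27, ((m : Matrix (Fin 2) (Fin 2) F₂₇)
      * (w : Matrix (Fin 2) (Fin 2) F₂₇)).det = 1 := by
    intro w
    rw [← Matrix.SpecialLinearGroup.coe_mul]
    exact (m * w).prop
  have hmw1 : (m : Matrix (Fin 2) (Fin 2) F₂₇) * (w1 : Matrix (Fin 2) (Fin 2) F₂₇)
      = !![-α, 1; -(1 + α ^ 2), α] := by
    rw [hm_coe, w1_coe]
    ext i j
    fin_cases i <;> fin_cases j <;> simp [Matrix.mul_apply, Fin.sum_univ_two] <;> ring
  have hmw2 : (m : Matrix (Fin 2) (Fin 2) F₂₇) * (w2 : Matrix (Fin 2) (Fin 2) F₂₇)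
      = !![1 + α, 1 - α; α + (1 + α ^ 2), α - (1 + α ^ 2)] := by
    rw [hm_coe, w2_coe]
    ext i j
    fin_cases i <;> fin_cases j <;> simp [Matrix.mul_apply, Fin.sum_univ_two] <;> ring
  have hmw3 : (m : Matrix (Fin 2) (Fin 2) F₂₇) * (w3 : Matrix (Fin 2) (Fin 2) F₂₇)
      = !![1 - α, -1 - α; α - (1 + α ^ 2), -α - (1 + α ^ 2)] := by
    rw [hm_coe, w3_coe]
    ext i j
    fin_cases i <;> fin_cases j <;> simp [Matrix.mul_apply, Fin.sum_univ_two] <;> ring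
  have htm1 : (((m : Matrix (Fin 2) (Fin 2) F₂₇)
      * (w1 : Matrix (Fin 2) (Fin 2) F₂₇)) ^ 7).trace = 0 := by
    rw [trace_pow_seven _ (det_mw w1), hmw1, Matrix.trace_fin_two_of]
    ring
  have htm2 : (((m : Matrix (Fin 2) (Fin 2) F₂₇)
      * (w2 : Matrix (Fin 2) (Fin 2) F₂₇)) ^ 7).trace = 0 := by
    rw [trace_pow_seven _ (det_mw w2), hmw2, Matrix.trace_fin_two_of]
    linear_combination
      ((84:F₂₇) + (443)*α + (-885)*α^2 + (857)*α^3 + (-246)*α^4 + (-499)*α^5 + (810)*α^6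
        + (-624)*α^7 + (293)*α^8 + (-85)*α^9 + (14)*α^10 + (-1)*α^11) * hα
      + ((28:F₂₇) + (171)*α + (-145)*α^2) * h3
  have htm3 : (((m : Matrix (Fin 2) (Fin 2) F₂₇)
      * (w3 : Matrix (Fin 2) (Fin 2) F₂₇)) ^ 7).trace = 0 := by
    rw [trace_pow_seven _ (det_mw w3), hmw3, Matrix.trace_fin_two_of]
    linear_combination
      ((-3840:F₂₇) + (-2921)*α + (-2177)*α^2 + (-1551)*α^3 + (-1202)*α^4 + (-1115)*α^5
        + (-982)*α^6 + (-652)*α^7 + (-295)*α^8 + (-85)*α^9 + (-14)*α^10 + (-1)*α^11) * hα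
      + ((-1280:F₂₇) + (-2249)*α + (-1697)*α^2) * h3
  -- all elements of the coset (mk m) • P have even order
  have key : ∀ x ∈ (P : Set PSL27), 2 ∣ orderOf ((QuotientGroup.mk m : PSL27) * x) := by
    intro x hx
    rw [P_coe] at hx
    rcases hx with rfl | rfl | rfl | rfl
    · rw [mul_one]
      exact two_dvd_orderOf_mk h2ne m htm
    · rw [aP, ← mk_mul]
      apply two_dvd_orderOf_mk h2ne
      rw [Matrix.SpecialLinearGroup.coe_mul]
      exact htm1
    · rw [bP, ← mk_mul]
      apply two_dvd_orderOf_mk h2ne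
      rw [Matrix.SpecialLinearGroup.coe_mul]
      exact htm2
    · rw [cP, ← mk_mul]
      apply two_dvd_orderOf_mk h2ne
      rw [Matrix.SpecialLinearGroup.coe_mul]
      exact htm3
  -- transport along Sylow conjugacy
  haveI : Finite (Sylow 2 PSL27) :=
    Finite.of_injective (fun S : Sylow 2 PSL27 => (S : Subgroup PSL27))
      (fun _ _ h => Sylow.ext h)
  obtain ⟨x, hx⟩ := MulAction.exists_smul_eq PSL27 Q PSyl
  refine ⟨x⁻¹ * (QuotientGroup.mk m : PSL27) * x, ?_⟩
  intro h hh
  rw [Set.mem_smul_set] at hh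
  obtain ⟨q, hq, rfl⟩ := hh
  have hsub : MulAut.conj x • (Q : Subgroup PSL27) = P := by
    rw [← Sylow.coe_subgroup_smul, hx, PSyl_coe]
  have hq' : x * q * x⁻¹ ∈ (P : Set PSL27) := by
    rw [← hsub]
    exact Subgroup.smul_mem_pointwise_smul q (MulAut.conj x) (Q : Subgroup PSL27) hq
  have hkey := key _ hq'
  have hconj : (QuotientGroup.mk m : PSL27) * (x * q * x⁻¹)
      = x * ((x⁻¹ * (QuotientGroup.mk m : PSL27) * x) * q) * x⁻¹ := by
    group
  rw [hconj] at hkey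
  have horder : orderOf (x * ((x⁻¹ * (QuotientGroup.mk m : PSL27) * x) * q) * x⁻¹)
      = orderOf ((x⁻¹ * (QuotientGroup.mk m : PSL27) * x) * q) := by
    have := orderOf_injective (MulAut.conj x).toMonoidHom
      (MulEquiv.injective _) ((x⁻¹ * (QuotientGroup.mk m : PSL27) * x) * q)
    simpa [MulAut.conj_apply, mul_assoc] using this
  rw [horder] at hkey
  simpa [smul_eq_mul] using hkey
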